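/- Assume (Γ, O) is tunable with minimal word w_min. Suppose (a, a') is a tuning pair with a = w_min² (two copies of w_min), and a' contains exactly one letter N. Then for every sufficiently large odd number n, the word a'·w_min^n (a' followed by n copies of w_min) is dominant. -/

import Mathlib

/-- The set `Σ` of infinite paths in the graph with edge relation `E`. -/
def InSigma (E : ℕ → ℕ → Prop) (a : ℕ → ℕ) : Prop :=
  ∀ n : ℕ, E (a n) (a (n + 1))

/-- The shift map `σ`. -/
def shiftSeq (a : ℕ → ℕ) : ℕ → ℕ := fun n => a (n + 1)

/-- The linear order on infinite sequences determined by the sign function `O`: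
`a < b` iff they first differ at position `n` and `(∏_{k<n} O(a k)) * (a n - b n) < 0`. -/
def SeqLt (O : ℕ → ℤ) (a b : ℕ → ℕ) : Prop :=
  ∃ n : ℕ, (∀ k < n, a k = b k) ∧
    (∏ k ∈ Finset.range n, O (a k)) * ((a n : ℤ) - (b n : ℤ)) < 0

def SeqLe (O : ℕ → ℤ) (a b : ℕ → ℕ) : Prop :=
  SeqLt O a b ∨ a = b

/-- An element of `Σ` is admissible if it starts with `N` and all its shifts are `≤` itself. -/
def AdmissibleSeq (E : ℕ → ℕ → Prop) (O : ℕ → ℤ) (N : ℕ) (a : ℕ → ℕ) : Prop :=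
  InSigma E a ∧ a 0 = N ∧ ∀ n : ℕ, SeqLe O (shiftSeq^[n] a) a

/-- `w^∞`, the periodic sequence repeating the finite word `w`. -/
def perSeq (w : List ℕ) : ℕ → ℕ := fun n => w.getD (n % w.length) 0

/-- The infinite sequence starting with the word `w` followed by the sequence `s`. -/
def wordThen (w : List ℕ) (s : ℕ → ℕ) : ℕ → ℕ :=
  fun n => if n < w.length then w.getD n 0 else s (n - w.length)

/-- `sgn(w) = ∏_k O(w_k)`. -/
def wordSgn (O : ℕ → ℤ) (w : List ℕ) : ℤ := (w.map O).prod

/-- The partial order on finite words determined by `O`. -/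
def WordLt (O : ℕ → ℤ) (u v : List ℕ) : Prop :=
  ∃ j : ℕ, j < min u.length v.length ∧ (∀ k < j, u.getD k 0 = v.getD k 0) ∧
    (∏ k ∈ Finset.range j, O (u.getD k 0)) * ((u.getD j 0 : ℤ) - (v.getD j 0 : ℤ)) < 0

/-- A finite word is periodic if `w^∞ ∈ Σ` and `w` starts with the letter `N`. -/
def PeriodicWord (E : ℕ → ℕ → Prop) (N : ℕ) (w : List ℕ) : Prop :=
  w ≠ [] ∧ InSigma E (perSeq w) ∧ w.getD 0 0 = N

/-- A finite word is irreducible if it is not a concatenation of two or more copies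
of a shorter word. -/
def IrreducibleWord (w : List ℕ) : Prop :=
  ∀ (u : List ℕ) (k : ℕ), 2 ≤ k → w ≠ (List.replicate k u).flatten

/-- A finite word is extremal if it is periodic and `w^∞` is admissible. -/
def ExtremalWord (E : ℕ → ℕ → Prop) (O : ℕ → ℤ) (N : ℕ) (w : List ℕ) : Prop :=
  PeriodicWord E N w ∧ AdmissibleSeq E O N (perSeq w)

/-- A finite word is admissible if it is extremal and has sign `1`. -/
def AdmissibleWord (E : ℕ → ℕ → Prop) (O : ℕ → ℤ) (N : ℕ) (w : List ℕ) : Prop :=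
  ExtremalWord E O N w ∧ wordSgn O w = 1

/-- A finite word `w` is dominant if it is periodic and `Suff_k(wN) < Pre_k(w)`
for all `2 ≤ k ≤ |w|`. -/
def DominantWord (E : ℕ → ℕ → Prop) (O : ℕ → ℤ) (N : ℕ) (w : List ℕ) : Prop :=
  PeriodicWord E N w ∧ ∀ k : ℕ, 2 ≤ k → k ≤ w.length →
    WordLt O ((w ++ [N]).drop (w.length + 1 - k)) (w.take k)

/-- `a' = Next(a)`: `a'` is the immediate successor of `a` among periodic words
of the same length. Equivalently, `a = Prev(a')`. -/
def IsNext (E : ℕ → ℕ → Prop) (O : ℕ → ℤ) (N : ℕ) (a a' : List ℕ) : Prop :=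
  PeriodicWord E N a ∧ PeriodicWord E N a' ∧ a.length = a'.length ∧ WordLt O a a' ∧
    ∀ u : List ℕ, PeriodicWord E N u → u.length = a.length →
      ¬(WordLt O a u ∧ WordLt O u a')

/-- `(a, a')` is a tuning pair: `a` admissible, `a'` extremal of sign `-1`, `a' = Next(a)`. -/
def TuningPair (E : ℕ → ℕ → Prop) (O : ℕ → ℤ) (N : ℕ) (a a' : List ℕ) : Prop :=
  AdmissibleWord E O N a ∧ ExtremalWord E O N a' ∧ wordSgn O a' = -1 ∧ IsNext E O N a a'

/-- Condition (1) of tunability for the word `wmin`. -/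
def MinWord (E : ℕ → ℕ → Prop) (O : ℕ → ℤ) (N : ℕ) (wmin : List ℕ) : Prop :=
  PeriodicWord E N wmin ∧ wmin.count N = 1 ∧ wordSgn O wmin = -1 ∧
    PeriodicWord E N (wmin ++ [N]) ∧
    ∀ u : List ℕ, PeriodicWord E N u → u.length = wmin.length + 1 →
      u = wmin ++ [N] ∨ WordLt O (wmin ++ [N]) u

/-- `(Γ, O)` is tunable with minimal word `wmin`. -/
def Tunable (E : ℕ → ℕ → Prop) (O : ℕ → ℤ) (N : ℕ) (wmin : List ℕ) : Prop :=
  MinWord E O N wmin ∧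
    ∀ a : List ℕ, ExtremalWord E O N a → IrreducibleWord a → wordSgn O a = -1 →
      (∃ k : ℕ, Odd k ∧ a = (List.replicate k wmin).flatten) ∨
        ∃ a' : List ℕ, TuningPair E O N a' a

/-- The edge relation of `Γ₂`, the complete directed graph on `{0, 1}`. -/
def E2 : ℕ → ℕ → Prop := fun i j => i ≤ 1 ∧ j ≤ 1

/-- The sign function `O₂` of the binary setting: `O₂ 0 = 1`, `O₂ 1 = -1`. -/
def O2 : ℕ → ℤ := fun k => if k = 0 then 1 else -1

/-- The tuning `w * v` of a tuning pair `(w, w')` by a finite binary word `v`. -/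
def tuningWord (w w' : List ℕ) (v : List ℕ) : List ℕ :=
  (v.map fun i => if i = 0 then w else w').flatten

/-- The tuning `w * v` of a tuning pair `(w, w')` by an infinite binary sequence `v`. -/
def tuningSeq (w w' : List ℕ) (v : ℕ → ℕ) : ℕ → ℕ :=
  fun n => (if v (n / w.length) = 0 then w else w').getD (n % w.length) 0

/-- A word can be written as a tuning `a * v` with `|v| > 1`. -/
def IsTuning (E : ℕ → ℕ → Prop) (O : ℕ → ℤ) (N : ℕ) (x : List ℕ) : Prop :=
  ∃ (a a' v : List ℕ), TuningPair E O N a a' ∧ AdmissibleWord E2 O2 1 v ∧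
    1 < v.length ∧ x = tuningWord a a' v

/-- An admissible word is nonrenormalizable if it cannot be written as a tuning. -/
def Nonrenormalizable (E : ℕ → ℕ → Prop) (O : ℕ → ℤ) (N : ℕ) (w : List ℕ) : Prop :=
  AdmissibleWord E O N w ∧ ¬ IsTuning E O N w

/-- `PS(w)`: the set of common proper prefixes/suffixes `v` of `w` with `w = yv = vz`, `z₀ = N`. -/
def PS (N : ℕ) (w : List ℕ) : Set (List ℕ) :=
  {v | 0 < v.length ∧ v.length < w.length ∧ (∃ y, w = y ++ v) ∧
    ∃ z, w = v ++ z ∧ z.getD 0 0 = N}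

/-- `RS(w)`: the set of words `z` with `w = vz` for some `v ∈ PS(w)`. -/
def RS (N : ℕ) (w : List ℕ) : Set (List ℕ) :=
  {z | ∃ v ∈ PS N w, w = v ++ z}

/-- There is a walk of length `n` from `i` to `j` in the graph `E`. -/
def HasWalk (E : ℕ → ℕ → Prop) (i j n : ℕ) : Prop :=
  ∃ a : ℕ → ℕ, a 0 = i ∧ a n = j ∧ ∀ k < n, E (a k) (a (k + 1))

/-- The standing assumptions on `(Γ, O)`: vertex set `{0, …, N}`, `O` takes values in `{±1}`,
and the graph is strongly connected and aperiodic (equivalently, primitive). -/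
def GoodGraph (E : ℕ → ℕ → Prop) (O : ℕ → ℤ) (N : ℕ) : Prop :=
  (∀ i j, E i j → i ≤ N ∧ j ≤ N) ∧
  (∀ i, i ≤ N → O i = 1 ∨ O i = -1) ∧
  (∃ m : ℕ, 0 < m ∧ ∀ i j, i ≤ N → j ≤ N → HasWalk E i j m)

section Statement9Aux

private lemma getD_take' (l : List ℕ) {k t : ℕ} (h : t < k) (d : ℕ) :
    (l.take k).getD t d = l.getD t d := by
  unfold List.getD
  rw [List.getElem?_take, if_pos h]

private lemma flatten_replicate_length (u : List ℕ) (n : ℕ) :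
    ((List.replicate n u).flatten).length = n * u.length := by
  induction n with
  | zero => simp
  | succ n ih =>
    rw [List.replicate_succ, List.flatten_cons, List.length_append, ih]
    ring

private lemma flatten_replicate_getD (u : List ℕ) (n j : ℕ) (hu : 0 < u.length)
    (h : j < n * u.length) :
    ((List.replicate n u).flatten).getD j 0 = u.getD (j % u.length) 0 := by
  induction n generalizing j with
  | zero => simp at h
  | succ n ih =>
    rw [List.replicate_succ, List.flatten_cons]
    by_cases hj : j < u.length
    · rw [List.getD_append _ _ _ _ hj, Nat.mod_eq_of_lt hj]
    · push_neg at hj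
      rw [List.getD_append_right _ _ _ _ hj, ih]
      · rw [← Nat.mod_eq_sub_mod hj]
      · have h2 : (n + 1) * u.length = u.length + n * u.length := by ring
        omega

private lemma letter_le {E : ℕ → ℕ → Prop} {O : ℕ → ℤ} {N : ℕ}
    (hG : GoodGraph E O N) {u : List ℕ} (hu : InSigma E (perSeq u))
    {i : ℕ} (hi : i < u.length) : u.getD i 0 ≤ N := by
  have h := hu i
  have hper : perSeq u i = u.getD i 0 := by
    simp only [perSeq, Nat.mod_eq_of_lt hi]
  rw [hper] at h
  exact (hG.1 _ _ h).1

private lemma edge_consec {E : ℕ → ℕ → Prop} {u : List ℕ} (hu : InSigma E (perSeq u))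
    {r : ℕ} (hr : r + 1 < u.length) : E (u.getD r 0) (u.getD (r + 1) 0) := by
  have h := hu r
  have h1 : perSeq u r = u.getD r 0 := by
    simp only [perSeq, Nat.mod_eq_of_lt (show r < u.length by omega)]
  have h2 : perSeq u (r + 1) = u.getD (r + 1) 0 := by
    simp only [perSeq, Nat.mod_eq_of_lt hr]
  rwa [h1, h2] at h

private lemma edge_wrap {E : ℕ → ℕ → Prop} {u : List ℕ} (hu : InSigma E (perSeq u))
    (h0 : 0 < u.length) : E (u.getD (u.length - 1) 0) (u.getD 0 0) := by
  have h := hu (u.length - 1)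
  have h1 : perSeq u (u.length - 1) = u.getD (u.length - 1) 0 := by
    simp only [perSeq, Nat.mod_eq_of_lt (show u.length - 1 < u.length by omega)]
  have h2 : perSeq u (u.length - 1 + 1) = u.getD 0 0 := by
    have h3 : u.length - 1 + 1 = u.length := by omega
    simp only [perSeq, h3, Nat.mod_self]
  rwa [h1, h2] at h

private lemma count_one_unique {N : ℕ} {u : List ℕ} (hc : u.count N = 1)
    (h0 : u.getD 0 0 = N) {p : ℕ} (hp : 0 < p) (hpl : p < u.length) :
    u.getD p 0 ≠ N := by
  intro hpe
  match u, hpl with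
  | x :: t, hpl =>
    have hx : x = N := h0
    have hct : t.count N = 0 := by
      rw [hx, List.count_cons_self] at hc
      omega
    have hpl' : p - 1 < t.length := by
      simp only [List.length_cons] at hpl; omega
    have hNt : t.getD (p - 1) 0 = N := by
      have hcons : (x :: t).getD p 0 = t.getD (p - 1) 0 := by
        match p, hp with
        | (q + 1), _ => simp [List.getD_cons_succ]
      rw [hcons] at hpe; exact hpe
    have hmem : N ∈ t := by
      rw [List.getD_eq_getElem t 0 hpl'] at hNt
      rw [← hNt]
      exact List.getElem_mem hpl'
    rw [List.count_eq_zero] at hct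
    exact hct hmem



private lemma mod_succ_cases (x m : ℕ) (hm : 0 < m) :
    ((x + 1) % m = x % m + 1 ∧ x % m + 1 < m) ∨ (x % m = m - 1 ∧ (x + 1) % m = 0) := by
  have hxm : x % m < m := Nat.mod_lt _ hm
  have hadd : (x + 1) % m = (x % m + 1 % m) % m := Nat.add_mod x 1 m
  by_cases hm1 : m = 1
  · subst hm1
    right
    omega
  · have h1 : 1 % m = 1 := Nat.mod_eq_of_lt (by omega)
    rw [h1] at hadd
    by_cases hlt : x % m + 1 < m
    · left
      exact ⟨by rw [hadd, Nat.mod_eq_of_lt hlt], hlt⟩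
    · right
      have hx : x % m + 1 = m := by omega
      constructor
      · omega
      · rw [hadd, hx, Nat.mod_self]
end Statement9Aux

/-- Assume `(Γ, O)` is tunable with minimal word `wmin`. If `(a, a')` is a
tuning pair with `a = wmin²` and `a'` contains exactly one letter `N`, then for every
sufficiently large odd `n`, the word `a'·wmin^n` is dominant. -/
theorem statement9 (E : ℕ → ℕ → Prop) (O : ℕ → ℤ) (N : ℕ) (hG : GoodGraph E O N)
    (wmin : List ℕ) (htun : Tunable E O N wmin)
    (a a' : List ℕ) (hpair : TuningPair E O N a a')
    (ha : a = wmin ++ wmin) (ha' : a'.count N = 1) :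
    ∃ M : ℕ, ∀ n : ℕ, M ≤ n → Odd n →
      DominantWord E O N (a' ++ (List.replicate n wmin).flatten) := by
  classical
  obtain ⟨hmin, _htun2⟩ := htun
  obtain ⟨hPw, hcw, _hsw, _hPwN, _hminim⟩ := hmin
  obtain ⟨hwne, hwins, hw0⟩ := hPw
  obtain ⟨_hadm, _hext', _hsgn', hnext⟩ := hpair
  obtain ⟨_hPa, hPa', hlen, hlt, _hmax⟩ := hnext
  obtain ⟨ha'ne, ha'ins, ha'0⟩ := hPa'
  have hm1 : 0 < wmin.length := List.length_pos_iff.mpr hwne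
  have hlen' : a'.length = wmin.length + wmin.length := by
    rw [← hlen, ha, List.length_append]
  -- the first difference j between a = wmin² and a'
  obtain ⟨j, hjlt, hjagree, hjsign⟩ := hlt
  rw [ha] at hjlt hjagree hjsign
  have hjlt2 : j < wmin.length + wmin.length := by
    rw [List.length_append, hlen'] at hjlt
    omega
  have haN : (wmin ++ wmin).getD wmin.length 0 = N := by
    rw [List.getD_append_right wmin wmin 0 wmin.length (le_refl _), Nat.sub_self]
    exact hw0
  have hjm : j ≤ wmin.length := by
    by_contra hc
    push_neg at hc
    have h := hjagree wmin.length hc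
    rw [haN] at h
    exact count_one_unique ha' ha'0 hm1 (by omega) h.symm
  refine ⟨1, fun n hn _hodd => ?_⟩
  set R := (List.replicate n wmin).flatten with hR
  have hRlen : R.length = n * wmin.length := flatten_replicate_length wmin n
  set w := a' ++ R with hwdef
  have hmn : wmin.length ≤ n * wmin.length := by
    calc wmin.length = 1 * wmin.length := (one_mul _).symm
    _ ≤ n * wmin.length := Nat.mul_le_mul_right _ hn
  have hLw : w.length = wmin.length + wmin.length + n * wmin.length := by
    rw [hwdef, List.length_append, hlen', hRlen]
  have hLwpos : 0 < w.length := by omega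
  -- values of w
  have hwv1 : ∀ s < wmin.length + wmin.length, w.getD s 0 = a'.getD s 0 := by
    intro s hs
    exact List.getD_append _ _ _ _ (by omega)
  have hwv2 : ∀ s, wmin.length + wmin.length ≤ s → s < w.length →
      w.getD s 0 = wmin.getD ((s - (wmin.length + wmin.length)) % wmin.length) 0 := by
    intro s hs1 hs2
    rw [hwdef, List.getD_append_right _ _ _ _ (by omega), hlen']
    exact flatten_replicate_getD wmin n _ hm1 (by omega)
  have hwletter : ∀ s < w.length, w.getD s 0 ≤ N := by
    intro s hs
    by_cases h : s < wmin.length + wmin.length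
    · rw [hwv1 s h]
      exact letter_le hG ha'ins (by omega)
    · rw [hwv2 s (by omega) hs]
      exact letter_le hG hwins (Nat.mod_lt _ hm1)
  have hwN0 : w.getD 0 0 = N := by
    rw [hwv1 0 (by omega)]; exact ha'0
  -- consecutive edges within w
  have hconsec : ∀ r, r + 1 < w.length → E (w.getD r 0) (w.getD (r + 1) 0) := by
    intro r hr
    by_cases h1 : r + 1 < wmin.length + wmin.length
    · rw [hwv1 r (by omega), hwv1 (r + 1) h1]
      exact edge_consec ha'ins (by omega)
    · by_cases h2 : r + 1 = wmin.length + wmin.length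
      · rw [hwv1 r (by omega), hwv2 (r + 1) (by omega) hr]
        have hz : (r + 1 - (wmin.length + wmin.length)) % wmin.length = 0 := by
          rw [h2]; simp
        rw [hz, hw0, ← ha'0]
        have hwrap := edge_wrap ha'ins (show 0 < a'.length by omega)
        rwa [hlen', (show wmin.length + wmin.length - 1 = r by omega)] at hwrap
      · have h3 : wmin.length + wmin.length ≤ r := by omega
        rw [hwv2 r h3 (by omega), hwv2 (r + 1) (by omega) hr]
        have hre : r + 1 - (wmin.length + wmin.length)
            = (r - (wmin.length + wmin.length)) + 1 := by omega
        rw [hre]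
        rcases mod_succ_cases (r - (wmin.length + wmin.length)) wmin.length hm1 with
          ⟨he, hlt2⟩ | ⟨he, he2⟩
        · rw [he]
          exact edge_consec hwins hlt2
        · rw [he, he2]
          exact edge_wrap hwins hm1
  -- the wrap-around edge
  have hwrapw : E (w.getD (w.length - 1) 0) (w.getD 0 0) := by
    have hre : w.length - 1 - (wmin.length + wmin.length) = n * wmin.length - 1 := by omega
    have hval : w.getD (w.length - 1) 0
        = wmin.getD ((n * wmin.length - 1) % wmin.length) 0 := by
      rw [hwv2 (w.length - 1) (by omega) (by omega), hre]
    have hmod : (n * wmin.length - 1) % wmin.length = wmin.length - 1 := by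
      rcases mod_succ_cases (n * wmin.length - 1) wmin.length hm1 with ⟨he, hlt2⟩ | ⟨he, _⟩
      · exfalso
        have hs : n * wmin.length - 1 + 1 = n * wmin.length := by omega
        rw [hs, Nat.mul_mod_left] at he
        omega
      · exact he
    rw [hval, hmod, hwN0, ← hw0]
    exact edge_wrap hwins hm1
  -- w is a periodic word
  have hwper : PeriodicWord E N w := by
    refine ⟨?_, ?_, hwN0⟩
    · intro hcon
      rw [hcon] at hLwpos
      simp at hLwpos
    · intro i
      have hrlt : i % w.length < w.length := Nat.mod_lt _ hLwpos
      have hper1 : perSeq w i = w.getD (i % w.length) 0 := rfl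
      have hper2 : perSeq w (i + 1) = w.getD ((i + 1) % w.length) 0 := rfl
      rw [hper1, hper2]
      rcases mod_succ_cases i w.length hLwpos with ⟨he, hlt2⟩ | ⟨he, he2⟩
      · rw [he]
        exact hconsec _ hlt2
      · rw [he, he2]
        exact hwrapw
  refine ⟨hwper, ?_⟩
  intro k hk2 hkLw
  set p := w.length + 1 - k with hpdef
  have hp1 : 1 ≤ p := by omega
  have hpLw : p < w.length := by omega
  have hulen : ((w ++ [N]).drop p).length = k := by
    rw [List.length_drop, List.length_append]
    simp only [List.length_singleton]
    omega
  have hvlen : (w.take k).length = k := by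
    rw [List.length_take]
    omega
  have hu : ∀ s d, ((w ++ [N]).drop p).getD s d = (w ++ [N]).getD (p + s) d := by
    intro s d
    unfold List.getD
    rw [List.getElem?_drop]
  have hv : ∀ t, t < k → (w.take k).getD t 0 = w.getD t 0 := by
    intro t ht
    exact getD_take' w ht 0
  by_cases hpN : w.getD p 0 = N
  · -- hard case: the suffix starts with the letter N
    have hp2m : wmin.length + wmin.length ≤ p := by
      by_contra hc
      push_neg at hc
      have h := hwv1 p hc
      rw [hpN] at h
      exact count_one_unique ha' ha'0 hp1 (by omega) h.symm
    have hjj : (p - (wmin.length + wmin.length)) % wmin.length = 0 := by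
      by_contra hc
      have h := hwv2 p hp2m hpLw
      rw [hpN] at h
      exact count_one_unique hcw hw0 (Nat.pos_of_ne_zero hc) (Nat.mod_lt _ hm1) h.symm
    obtain ⟨i, hi⟩ : ∃ i, p - (wmin.length + wmin.length) = i * wmin.length := by
      obtain ⟨i, hi⟩ := Nat.dvd_of_mod_eq_zero hjj
      exact ⟨i, by rw [hi, Nat.mul_comm]⟩
    have hi2 : p - (wmin.length + wmin.length) = wmin.length * i := by
      rw [hi, Nat.mul_comm]
    have hilt : i * wmin.length < n * wmin.length := by omega
    have hile : i * wmin.length + wmin.length ≤ n * wmin.length := by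
      have hile' : i + 1 ≤ n := by
        by_contra hc
        push_neg at hc
        have h := Nat.mul_le_mul_right wmin.length (show n ≤ i by omega)
        omega
      have h := Nat.mul_le_mul_right wmin.length hile'
      rwa [Nat.succ_mul] at h
    have hpe : p = wmin.length + wmin.length + i * wmin.length := by omega
    -- the suffix agrees with wmin ++ wmin on positions 0..wmin.length
    have hagreeU : ∀ s ≤ wmin.length,
        (w ++ [N]).getD (p + s) 0 = (wmin ++ wmin).getD s 0 := by
      intro s hs
      by_cases hsm : s < wmin.length
      · have hidx : p + s < w.length := by omega
        rw [List.getD_append _ _ _ _ hidx, hwv2 (p + s) (by omega) hidx,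
          (show p + s - (wmin.length + wmin.length) = wmin.length * i + s by omega),
          Nat.mul_add_mod, Nat.mod_eq_of_lt hsm, List.getD_append _ _ _ _ hsm]
      · have hsme : s = wmin.length := by omega
        subst hsme
        rw [haN]
        by_cases hi1 : i * wmin.length + wmin.length < n * wmin.length
        · have hidx : p + wmin.length < w.length := by omega
          rw [List.getD_append _ _ _ _ hidx, hwv2 (p + wmin.length) (by omega) hidx,
            (show p + wmin.length - (wmin.length + wmin.length)
              = wmin.length * i + wmin.length by omega),
            (show wmin.length * i + wmin.length = wmin.length * (i + 1) from
              (Nat.mul_succ wmin.length i).symm),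
            Nat.mul_mod_right]
          exact hw0
        · have hidx : p + wmin.length = w.length := by omega
          rw [List.getD_append_right _ _ _ _ (by omega), hidx, Nat.sub_self]
          rfl
    have hkbig : wmin.length + 1 ≤ k := by omega
    refine ⟨j, ?_, ?_, ?_⟩
    · rw [hulen, hvlen]
      omega
    · intro t ht
      have htm : t ≤ wmin.length := by omega
      rw [hu t 0, hagreeU t htm, hv t (by omega), hwv1 t (by omega)]
      exact hjagree t ht
    · have e1 : ∏ t ∈ Finset.range j, O (((w ++ [N]).drop p).getD t 0)
          = ∏ t ∈ Finset.range j, O ((wmin ++ wmin).getD t 0) := by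
        refine Finset.prod_congr rfl fun t ht => ?_
        rw [Finset.mem_range] at ht
        rw [hu t 0, hagreeU t (by omega)]
      rw [e1, hu j 0, hagreeU j hjm, hv j (by omega), hwv1 j (by omega)]
      exact hjsign
  · -- easy case: the suffix starts with a letter < N
    refine ⟨0, ?_, fun t ht => absurd ht (by omega), ?_⟩
    · rw [hulen, hvlen]
      omega
    · simp only [Finset.prod_range_zero, one_mul]
      rw [hu 0 0, Nat.add_zero, hv 0 (by omega), hwN0,
        List.getD_append _ _ _ _ hpLw]
      have h1 : w.getD p 0 ≤ N := hwletter p hpLw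
      omega
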